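/- If U₁,...,Uₙ,V₁,...,Vₙ are 2n jointly independent uniform [0,1] random variables, then Var( n⁻² ∑_{i=1}^n ∑_{j=1}^n |Uᵢ - Vⱼ| ) = (n+4)/(90 n²). -/

import Mathlib

open MeasureTheory ProbabilityTheory Finset

local notation "μ₀" => (volume.restrict (Set.Icc (0:ℝ) 1))

instance : IsProbabilityMeasure (volume.restrict (Set.Icc (0:ℝ) 1)) :=
  ⟨by simp [Real.volume_Icc]⟩

lemma lin_int (u : ℝ) : ∫ v in (0:ℝ)..u, (u - v) = u^2/2 := by
  rw [intervalIntegral.integral_sub intervalIntegrable_const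
    (Continuous.intervalIntegrable (continuous_id') _ _ : IntervalIntegrable (fun v : ℝ => v) _ _ _),
    intervalIntegral.integral_const, integral_id]
  simp [smul_eq_mul]; ring

lemma lin_int2 (u : ℝ) : ∫ v in u..(1:ℝ), (v - u) = (1-u)^2/2 := by
  rw [intervalIntegral.integral_sub
    (Continuous.intervalIntegrable (continuous_id') _ _ : IntervalIntegrable (fun v : ℝ => v) _ _ _)
    intervalIntegrable_const, intervalIntegral.integral_const, integral_id]
  simp [smul_eq_mul]; ring

lemma mu_int_eq (f : ℝ → ℝ) : ∫ x, f x ∂μ₀ = ∫ x in (0:ℝ)..1, f x := by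
  rw [intervalIntegral.integral_of_le zero_le_one, ← integral_Icc_eq_integral_Ioc]

lemma g_eval {u : ℝ} (hu : u ∈ Set.Icc (0:ℝ) 1) : ∫ v, |u - v| ∂μ₀ = u^2 - u + 1/2 := by
  rw [mu_int_eq]
  have hi : ∀ a b : ℝ, IntervalIntegrable (fun v => |u - v|) volume a b := fun a b =>
    ((continuous_const.sub continuous_id').abs).intervalIntegrable a b
  rw [← intervalIntegral.integral_add_adjacent_intervals (a := 0) (b := u) (c := 1) (hi 0 u) (hi u 1)]
  have e1 : ∫ v in (0:ℝ)..u, |u - v| = ∫ v in (0:ℝ)..u, (u - v) := by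
    apply intervalIntegral.integral_congr
    intro v hv
    rw [Set.uIcc_of_le hu.1] at hv
    exact abs_of_nonneg (by linarith [hv.2])
  have e2 : ∫ v in u..(1:ℝ), |u - v| = ∫ v in u..(1:ℝ), (v - u) := by
    apply intervalIntegral.integral_congr
    intro v hv
    rw [Set.uIcc_of_le hu.2] at hv
    show |u - v| = v - u
    rw [abs_sub_comm]
    exact abs_of_nonneg (by linarith [hv.1])
  rw [e1, e2, lin_int, lin_int2]
  ring

lemma g2_eval (u : ℝ) : ∫ v, (u - v)^2 ∂μ₀ = u^2 - u + 1/3 := by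
  rw [mu_int_eq]
  have h : ∀ x ∈ Set.uIcc (0:ℝ) 1, HasDerivAt (fun y : ℝ => -((u - y)^3/3)) ((u - x)^2) x := by
    intro x _
    have h1 : HasDerivAt (fun y : ℝ => u - y) (-1) x := by
      simpa using (HasDerivAt.const_sub u (hasDerivAt_id x))
    have h2 := ((h1.pow 3).div_const 3).neg
    exact h2.congr_deriv (by ring)
  rw [intervalIntegral.integral_eq_sub_of_hasDerivAt h
    (by apply Continuous.intervalIntegrable; continuity)]
  ring

lemma poly1 : ∫ x, (x^2 - x + 1/2) ∂μ₀ = 1/3 := by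
  rw [mu_int_eq]
  have h : ∀ x ∈ Set.uIcc (0:ℝ) 1, HasDerivAt (fun y : ℝ => y^3/3 - y^2/2 + y/2) (x^2 - x + 1/2) x := by
    intro x _
    have := (((hasDerivAt_pow 3 x).div_const 3).sub ((hasDerivAt_pow 2 x).div_const 2)).add
      ((hasDerivAt_id x).div_const 2)
    exact this.congr_deriv (by ring)
  rw [intervalIntegral.integral_eq_sub_of_hasDerivAt h
    (by apply Continuous.intervalIntegrable; continuity)]
  norm_num

lemma poly2 : ∫ x, (x^2 - x + 1/2)^2 ∂μ₀ = 7/60 := by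
  rw [mu_int_eq]
  have h : ∀ x ∈ Set.uIcc (0:ℝ) 1, HasDerivAt
      (fun y : ℝ => y^5/5 - y^4/2 + 2*y^3/3 - y^2/2 + y/4) ((x^2 - x + 1/2)^2) x := by
    intro x _
    have := (((((hasDerivAt_pow 5 x).div_const 5).sub ((hasDerivAt_pow 4 x).div_const 2)).add
      (((hasDerivAt_pow 3 x).const_mul 2).div_const 3)).sub ((hasDerivAt_pow 2 x).div_const 2)).add
      ((hasDerivAt_id x).div_const 4)
    exact this.congr_deriv (by ring)
  rw [intervalIntegral.integral_eq_sub_of_hasDerivAt h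
    (by apply Continuous.intervalIntegrable; continuity)]
  norm_num

lemma poly3 : ∫ x, (x^2 - x + 1/3) ∂μ₀ = 1/6 := by
  rw [mu_int_eq]
  have h : ∀ x ∈ Set.uIcc (0:ℝ) 1, HasDerivAt (fun y : ℝ => y^3/3 - y^2/2 + y/3) (x^2 - x + 1/3) x := by
    intro x _
    have := (((hasDerivAt_pow 3 x).div_const 3).sub ((hasDerivAt_pow 2 x).div_const 2)).add
      ((hasDerivAt_id x).div_const 3)
    exact this.congr_deriv (by ring)
  rw [intervalIntegral.integral_eq_sub_of_hasDerivAt h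
    (by apply Continuous.intervalIntegrable; continuity)]
  norm_num


local notation "I01" => (Set.Icc (0:ℝ) 1)
local notation "μ₂" => Measure.prod (volume.restrict (Set.Icc (0:ℝ) 1)) (volume.restrict (Set.Icc (0:ℝ) 1))
local notation "μ₃" => Measure.prod (Measure.prod (volume.restrict (Set.Icc (0:ℝ) 1)) (volume.restrict (Set.Icc (0:ℝ) 1))) (volume.restrict (Set.Icc (0:ℝ) 1))


lemma prod_eq : μ₂ = (volume : Measure (ℝ × ℝ)).restrict (I01 ×ˢ I01) := by
  rw [Measure.prod_restrict, Measure.volume_eq_prod]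

lemma integrable_cont {f : ℝ × ℝ → ℝ} (hf : Continuous f) : Integrable f μ₂ := by
  rw [prod_eq]
  exact hf.continuousOn.integrableOn_compact (isCompact_Icc.prod isCompact_Icc)

lemma prod3_eq : μ₃
    = (volume : Measure ((ℝ × ℝ) × ℝ)).restrict ((I01 ×ˢ I01) ×ˢ I01) := by
  rw [prod_eq, Measure.prod_restrict, ← Measure.volume_eq_prod (α := ℝ × ℝ) (β := ℝ)]

lemma integrable_cont3 {f : (ℝ × ℝ) × ℝ → ℝ} (hf : Continuous f) :
    Integrable f μ₃ := by
  rw [prod3_eq]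
  exact hf.continuousOn.integrableOn_compact
    ((isCompact_Icc.prod isCompact_Icc).prod isCompact_Icc)

lemma intA : ∫ p, |p.1 - p.2| ∂μ₂ = 1/3 := by
  rw [integral_prod _ (integrable_cont (f := fun p : ℝ × ℝ => |p.1 - p.2|) ((continuous_fst.sub continuous_snd).abs))]
  have : ∀ u ∈ I01, (∫ v, |u - v| ∂μ₀) = u^2 - u + 1/2 := fun u hu => g_eval hu
  rw [setIntegral_congr_fun measurableSet_Icc this]
  exact poly1

lemma intB : ∫ p, |p.1 - p.2|^2 ∂μ₂ = 1/6 := by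
  rw [integral_prod _ (integrable_cont (f := fun p : ℝ × ℝ => |p.1 - p.2|^2) (((continuous_fst.sub continuous_snd).abs).pow 2))]
  have : ∀ u ∈ I01, (∫ v, |u - v|^2 ∂μ₀) = u^2 - u + 1/3 := by
    intro u hu
    simp_rw [sq_abs]
    exact g2_eval u
  rw [setIntegral_congr_fun measurableSet_Icc this]
  exact poly3

lemma intC : ∫ q, |q.1.1 - q.1.2| * |q.1.1 - q.2| ∂μ₃ = 7/60 := by
  rw [integral_prod _ (integrable_cont3 (f := fun q : (ℝ × ℝ) × ℝ => |q.1.1 - q.1.2| * |q.1.1 - q.2|) (((continuous_fst.fst.sub continuous_fst.snd).abs).mul ((continuous_fst.fst.sub continuous_snd).abs)))]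
  have h1 : ∀ p ∈ I01 ×ˢ I01,
      (∫ w, |p.1 - p.2| * |p.1 - w| ∂μ₀) = |p.1 - p.2| * (p.1^2 - p.1 + 1/2) := by
    intro p hp
    rw [integral_const_mul, g_eval hp.1]
  rw [show μ₂ = (volume : Measure (ℝ × ℝ)).restrict (I01 ×ˢ I01) from prod_eq]
  rw [setIntegral_congr_fun (measurableSet_Icc.prod measurableSet_Icc) h1]
  rw [← prod_eq, integral_prod _ (integrable_cont (f := fun p : ℝ × ℝ => |p.1 - p.2| * (p.1^2 - p.1 + 1/2)) (((continuous_fst.sub continuous_snd).abs).mul (by continuity)))]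
  have h2 : ∀ u ∈ I01, (∫ v, |u - v| * (u^2 - u + 1/2) ∂μ₀) = (u^2 - u + 1/2)^2 := by
    intro u hu
    rw [integral_mul_const, g_eval hu]
    ring
  rw [setIntegral_congr_fun measurableSet_Icc h2]
  exact poly2

lemma intD : ∫ q, |q.1.1 - q.1.2| * |q.2 - q.1.2| ∂μ₃ = 7/60 := by
  rw [integral_prod _ (integrable_cont3 (f := fun q : (ℝ × ℝ) × ℝ => |q.1.1 - q.1.2| * |q.2 - q.1.2|) (((continuous_fst.fst.sub continuous_fst.snd).abs).mul ((continuous_snd.sub continuous_fst.snd).abs)))]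
  have h1 : ∀ p ∈ I01 ×ˢ I01,
      (∫ w, |p.1 - p.2| * |w - p.2| ∂μ₀) = |p.1 - p.2| * (p.2^2 - p.2 + 1/2) := by
    intro p hp
    rw [integral_const_mul]
    congr 1
    rw [show (fun w => |w - p.2|) = fun w => |p.2 - w| from funext fun w => abs_sub_comm _ _]
    exact g_eval hp.2
  rw [show μ₂ = (volume : Measure (ℝ × ℝ)).restrict (I01 ×ˢ I01) from prod_eq]
  rw [setIntegral_congr_fun (measurableSet_Icc.prod measurableSet_Icc) h1]
  rw [← prod_eq, integral_prod_symm _ (integrable_cont (f := fun p : ℝ × ℝ => |p.1 - p.2| * (p.2^2 - p.2 + 1/2)) (((continuous_fst.sub continuous_snd).abs).mul (by continuity)))]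
  have h2 : ∀ v ∈ I01, (∫ u, |u - v| * (v^2 - v + 1/2) ∂μ₀) = (v^2 - v + 1/2)^2 := by
    intro v hv
    rw [integral_mul_const]
    rw [show (fun u => |u - v|) = fun u => |v - u| from funext fun u => abs_sub_comm _ _]
    rw [g_eval hv]
    ring
  rw [setIntegral_congr_fun measurableSet_Icc h2]
  exact poly2




lemma sum_ite_pair {n : ℕ} (a b : ℝ) :
    ∑ j : Fin n, ∑ l : Fin n, (if j = l then a else b) = n * a + n * ((n:ℝ) - 1) * b := by
  have h : ∀ j : Fin n, ∑ l : Fin n, (if j = l then a else b) = a + ((n:ℝ) - 1) * b := by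
    intro j
    have : ∀ l : Fin n, (if j = l then a else b) = b + (if j = l then a - b else 0) := by
      intro l; split <;> ring
    simp_rw [this, Finset.sum_add_distrib, Finset.sum_ite_eq, Finset.sum_const, card_univ,
      Fintype.card_fin, mem_univ, if_true, nsmul_eq_mul]
    ring
  simp_rw [h, Finset.sum_const, card_univ, Fintype.card_fin, nsmul_eq_mul]
  ring

set_option maxHeartbeats 1600000 in
theorem variance_double_sum_abs
    {Ω : Type*} [MeasureSpace Ω] [IsProbabilityMeasure (ℙ : Measure Ω)]
    (n : ℕ) (hn : 1 ≤ n) (U V : Fin n → Ω → ℝ)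
    (hU : ∀ i, Measurable (U i)) (hV : ∀ i, Measurable (V i))
    (hInd : iIndepFun (Sum.elim U V) ℙ)
    (hUunif : ∀ i, Measure.map (U i) ℙ = volume.restrict (Set.Icc (0:ℝ) 1))
    (hVunif : ∀ i, Measure.map (V i) ℙ = volume.restrict (Set.Icc (0:ℝ) 1)) :
    variance (fun ω => (1 / (n:ℝ)^2) * ∑ i : Fin n, ∑ j : Fin n, |U i ω - V j ω|) ℙ
      = ((n:ℝ) + 4) / (90 * (n:ℝ)^2) := by
  have hXm : ∀ a : Fin n ⊕ Fin n, Measurable (Sum.elim U V a) := by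
    intro a; cases a with
    | inl i => exact hU i
    | inr j => exact hV j
  set A : Fin n → Fin n → Ω → ℝ := fun i j ω => |U i ω - V j ω| with hA
  -- pair law
  have pairLaw : ∀ i j, Measure.map (fun ω => (U i ω, V j ω)) ℙ = μ₂ := by
    intro i j
    have h : IndepFun (U i) (V j) ℙ :=
      hInd.indepFun (show (Sum.inl i : Fin n ⊕ Fin n) ≠ Sum.inr j by simp)
    rw [(indepFun_iff_map_prod_eq_prod_map_map (hU i).aemeasurable (hV j).aemeasurable).mp h,
      hUunif i, hVunif j]
  -- triple laws
  have tripleLawU : ∀ i j l, j ≠ l → Measure.map (fun ω => ((U i ω, V j ω), V l ω)) ℙ = μ₃ := by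
    intro i j l hjl
    have h : IndepFun (fun ω => (U i ω, V j ω)) (V l) ℙ :=
      hInd.indepFun_prodMk hXm (Sum.inl i) (Sum.inr j) (Sum.inr l) (by simp) (by simp [hjl])
    rw [(indepFun_iff_map_prod_eq_prod_map_map
      ((hU i).prodMk (hV j)).aemeasurable (hV l).aemeasurable).mp h, pairLaw i j, hVunif l]
  have tripleLawV : ∀ i j k, i ≠ k → Measure.map (fun ω => ((U i ω, V j ω), U k ω)) ℙ = μ₃ := by
    intro i j k hik
    have h : IndepFun (fun ω => (U i ω, V j ω)) (U k) ℙ :=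
      hInd.indepFun_prodMk hXm (Sum.inl i) (Sum.inr j) (Sum.inl k) (by simp [hik]) (by simp)
    rw [(indepFun_iff_map_prod_eq_prod_map_map
      ((hU i).prodMk (hV j)).aemeasurable (hU k).aemeasurable).mp h, pairLaw i j, hUunif k]
  have habs : Continuous (fun p : ℝ × ℝ => |p.1 - p.2|) := (continuous_fst.sub continuous_snd).abs
  -- expectation of single terms
  have intAe : ∀ i j, ∫ ω, A i j ω ∂ℙ = 1/3 := by
    intro i j
    have := integral_map (μ := ℙ) (f := fun p : ℝ × ℝ => |p.1 - p.2|)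
      ((hU i).prodMk (hV j)).aemeasurable habs.aestronglyMeasurable
    rw [pairLaw i j] at this
    rw [hA, ← this, intA]
  -- integrability
  have intble : ∀ i j, Integrable (A i j) ℙ := by
    intro i j
    have h1 : Integrable (fun p : ℝ × ℝ => |p.1 - p.2|) (Measure.map (fun ω => (U i ω, V j ω)) ℙ) := by
      rw [pairLaw i j]; exact integrable_cont habs
    exact (integrable_map_measure habs.aestronglyMeasurable
      ((hU i).prodMk (hV j)).aemeasurable).mp h1
  have memA : ∀ i j, MemLp (A i j) 2 ℙ := by
    intro i j
    have h1 : Integrable (fun p : ℝ × ℝ => |p.1 - p.2|^2) (Measure.map (fun ω => (U i ω, V j ω)) ℙ) := by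
      rw [pairLaw i j]; exact integrable_cont (habs.pow 2)
    have h2 := (integrable_map_measure (habs.pow 2).aestronglyMeasurable
      ((hU i).prodMk (hV j)).aemeasurable).mp h1
    exact (memLp_two_iff_integrable_sq
      (((hU i).sub (hV j)).abs.aestronglyMeasurable)).mpr h2
  have intbleMul : ∀ i j k l, Integrable (fun ω => A i j ω * A k l ω) ℙ := by
    intro i j k l
    have := ((memA k l).smul (memA i j) (r := 1)).integrable le_rfl
    exact this
  -- product expectations
  have e_diag : ∀ i j, ∫ ω, A i j ω * A i j ω ∂ℙ = 1/6 := by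
    intro i j
    have := integral_map (μ := ℙ) (f := fun p : ℝ × ℝ => |p.1 - p.2|^2)
      ((hU i).prodMk (hV j)).aemeasurable (habs.pow 2).aestronglyMeasurable
    rw [pairLaw i j] at this
    simp_rw [hA, ← pow_two]
    rw [← this, intB]
  have e_shU : ∀ i j l, j ≠ l → ∫ ω, A i j ω * A i l ω ∂ℙ = 7/60 := by
    intro i j l hjl
    have hc : Continuous (fun q : (ℝ × ℝ) × ℝ => |q.1.1 - q.1.2| * |q.1.1 - q.2|) :=
      ((continuous_fst.fst.sub continuous_fst.snd).abs).mul
        ((continuous_fst.fst.sub continuous_snd).abs)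
    have := integral_map (μ := ℙ) (f := fun q : (ℝ × ℝ) × ℝ => |q.1.1 - q.1.2| * |q.1.1 - q.2|)
      (((hU i).prodMk (hV j)).prodMk (hV l)).aemeasurable hc.aestronglyMeasurable
    rw [tripleLawU i j l hjl] at this
    rw [hA, ← this, intC]
  have e_shV : ∀ i j k, i ≠ k → ∫ ω, A i j ω * A k j ω ∂ℙ = 7/60 := by
    intro i j k hik
    have hc : Continuous (fun q : (ℝ × ℝ) × ℝ => |q.1.1 - q.1.2| * |q.2 - q.1.2|) :=
      ((continuous_fst.fst.sub continuous_fst.snd).abs).mul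
        ((continuous_snd.sub continuous_fst.snd).abs)
    have := integral_map (μ := ℙ) (f := fun q : (ℝ × ℝ) × ℝ => |q.1.1 - q.1.2| * |q.2 - q.1.2|)
      (((hU i).prodMk (hV j)).prodMk (hU k)).aemeasurable hc.aestronglyMeasurable
    rw [tripleLawV i j k hik] at this
    rw [hA, ← this, intD]
  have e_dist : ∀ i j k l, i ≠ k → j ≠ l → ∫ ω, A i j ω * A k l ω ∂ℙ = 1/9 := by
    intro i j k l hik hjl
    have h4 := hInd.indepFun_prodMk_prodMk hXm (Sum.inl i) (Sum.inr j) (Sum.inl k) (Sum.inr l)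
      (by simp [hik]) (by simp) (by simp) (by simp [hjl])
    have habsm : Measurable (fun p : ℝ × ℝ => |p.1 - p.2|) :=
      (measurable_fst.sub measurable_snd).abs
    have hIF : IndepFun (A i j) (A k l) ℙ := h4.comp habsm habsm
    have := hIF.integral_mul_eq_mul_integral (((hU i).sub (hV j)).abs.aestronglyMeasurable)
      (((hU k).sub (hV l)).abs.aestronglyMeasurable)
    calc ∫ ω, A i j ω * A k l ω ∂ℙ = ∫ ω, (A i j * A k l) ω ∂ℙ := rfl
      _ = (∫ ω, A i j ω ∂ℙ) * ∫ ω, A k l ω ∂ℙ := this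
      _ = 1/9 := by rw [intAe, intAe]; norm_num
  -- the value function
  have e_val : ∀ (p q : Fin n × Fin n), ∫ ω, A p.1 p.2 ω * A q.1 q.2 ω ∂ℙ
      = if p.1 = q.1 then (if p.2 = q.2 then (1:ℝ)/6 else 7/60)
        else (if p.2 = q.2 then 7/60 else 1/9) := by
    rintro ⟨i, j⟩ ⟨k, l⟩
    by_cases hik : i = k
    · subst hik
      by_cases hjl : j = l
      · subst hjl; rw [if_pos rfl, if_pos rfl]; exact e_diag i j
      · rw [if_pos rfl, if_neg hjl]; exact e_shU i j l hjl
    · by_cases hjl : j = l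
      · subst hjl; rw [if_neg hik, if_pos rfl]; exact e_shV i j k hik
      · rw [if_neg hik, if_neg hjl]; exact e_dist i j k l hik hjl
  -- rewrite the target as a single sum over pairs
  have hsum_rw : (fun ω => (1 / (n:ℝ)^2) * ∑ i : Fin n, ∑ j : Fin n, |U i ω - V j ω|)
      = fun ω => (1 / (n:ℝ)^2) * ∑ p : Fin n × Fin n, A p.1 p.2 ω := by
    funext ω
    rw [← Finset.univ_product_univ, Finset.sum_product]
  have hMem : MemLp (fun ω => (1 / (n:ℝ)^2) * ∑ p : Fin n × Fin n, A p.1 p.2 ω) 2 ℙ :=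
    (memLp_finsetSum _ fun (p : Fin n × Fin n) _ => memA p.1 p.2).const_mul _
  have hEX : ∫ ω, (1 / (n:ℝ)^2) * ∑ p : Fin n × Fin n, A p.1 p.2 ω ∂ℙ
      = (1 / (n:ℝ)^2) * ((n:ℝ) * (n:ℝ) * (1/3)) := by
    rw [integral_const_mul, integral_finset_sum _ fun p _ => intble p.1 p.2]
    simp_rw [intAe]
    rw [Finset.sum_const, card_univ]
    simp
  have hXsq : (fun ω => (1 / (n:ℝ)^2) * ∑ p : Fin n × Fin n, A p.1 p.2 ω) ^ 2
      = fun ω => ((1 / (n:ℝ)^2)^2 *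
          ∑ p : Fin n × Fin n, ∑ q : Fin n × Fin n, A p.1 p.2 ω * A q.1 q.2 ω) := by
    funext ω
    rw [Pi.pow_apply, mul_pow, pow_two (∑ p : Fin n × Fin n, A p.1 p.2 ω), Finset.sum_mul_sum]
  have inner_val : ∀ i k : Fin n, (∑ j : Fin n, ∑ l : Fin n,
        (if i = k then (if j = l then (1:ℝ)/6 else 7/60) else (if j = l then 7/60 else 1/9)))
      = if i = k then ((n:ℝ) * (1/6) + (n:ℝ)*((n:ℝ)-1)*(7/60))
        else ((n:ℝ)*(7/60) + (n:ℝ)*((n:ℝ)-1)*(1/9)) := by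
    intro i k
    by_cases h : i = k
    · simp_rw [if_pos h]; exact sum_ite_pair _ _
    · simp_rw [if_neg h]; exact sum_ite_pair _ _
  have hEX2 : ∫ ω, ((1 / (n:ℝ)^2)^2 *
        ∑ p : Fin n × Fin n, ∑ q : Fin n × Fin n, A p.1 p.2 ω * A q.1 q.2 ω) ∂ℙ
      = (1 / (n:ℝ)^2)^2 *
        ((n:ℝ) * ((n:ℝ) * (1/6) + (n:ℝ)*((n:ℝ)-1)*(7/60))
          + (n:ℝ)*((n:ℝ)-1) * ((n:ℝ)*(7/60) + (n:ℝ)*((n:ℝ)-1)*(1/9))) := by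
    rw [integral_const_mul,
      integral_finset_sum _ fun p _ => integrable_finset_sum _ fun q _ => intbleMul p.1 p.2 q.1 q.2]
    simp_rw [integral_finset_sum _ fun q (_ : q ∈ Finset.univ) => intbleMul _ _ _ _, e_val]
    congr 1
    calc ∑ p : Fin n × Fin n, ∑ q : Fin n × Fin n,
          (if p.1 = q.1 then (if p.2 = q.2 then (1:ℝ)/6 else 7/60)
            else (if p.2 = q.2 then 7/60 else 1/9))
        = ∑ i : Fin n, ∑ j : Fin n, ∑ k : Fin n, ∑ l : Fin n,
            (if i = k then (if j = l then (1:ℝ)/6 else 7/60)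
              else (if j = l then 7/60 else 1/9)) := by
          simp_rw [Fintype.sum_prod_type]
      _ = ∑ i : Fin n, ∑ k : Fin n, ∑ j : Fin n, ∑ l : Fin n,
            (if i = k then (if j = l then (1:ℝ)/6 else 7/60)
              else (if j = l then 7/60 else 1/9)) :=
          Finset.sum_congr rfl fun i _ => Finset.sum_comm
      _ = ∑ i : Fin n, ∑ k : Fin n,
            (if i = k then ((n:ℝ) * (1/6) + (n:ℝ)*((n:ℝ)-1)*(7/60))
              else ((n:ℝ)*(7/60) + (n:ℝ)*((n:ℝ)-1)*(1/9))) :=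
          Finset.sum_congr rfl fun i _ => Finset.sum_congr rfl fun k _ => inner_val i k
      _ = (n:ℝ) * ((n:ℝ) * (1/6) + (n:ℝ)*((n:ℝ)-1)*(7/60))
          + (n:ℝ)*((n:ℝ)-1) * ((n:ℝ)*(7/60) + (n:ℝ)*((n:ℝ)-1)*(1/9)) := sum_ite_pair _ _
  rw [hsum_rw, variance_eq_sub hMem]
  have h2 : ℙ[(fun ω => (1 / (n:ℝ)^2) * ∑ p : Fin n × Fin n, A p.1 p.2 ω) ^ 2]
      = (1 / (n:ℝ)^2)^2 *
        ((n:ℝ) * ((n:ℝ) * (1/6) + (n:ℝ)*((n:ℝ)-1)*(7/60))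
          + (n:ℝ)*((n:ℝ)-1) * ((n:ℝ)*(7/60) + (n:ℝ)*((n:ℝ)-1)*(1/9))) := by
    rw [hXsq]; exact hEX2
  have h1 : ℙ[(fun ω => (1 / (n:ℝ)^2) * ∑ p : Fin n × Fin n, A p.1 p.2 ω)]
      = (1 / (n:ℝ)^2) * ((n:ℝ) * (n:ℝ) * (1/3)) := hEX
  rw [h1, h2]
  have hn0 : (n:ℝ) ≠ 0 := by
    have : (0:ℝ) < n := by exact_mod_cast hn
    exact ne_of_gt this
  field_simp
  ring
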